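/- Let R be a group, S ⊆ R, and let K, H be subgroups with 1 < K, K normal in H, and H < R, such that K·(S \ H) = S \ H = (S \ H)·K. Then for every k ∈ K, the map α_k : R → R that sends h ∈ H to hk and fixes all elements outside H is an automorphism of the Cayley digraph Cay(R,S). -/
import Mathlib


open scoped Pointwise Classical

private lemma helperL {R : Type*} [Group R] {S : Set R} {K H : Subgroup R}
    (h1 : (K : Set R) * (S \ (H : Set R)) = S \ (H : Set R))
    {a t : R} (ha : a ∈ K) (ht : t ∈ S) (htH : t ∉ H) :
    a * t ∈ S ∧ a * t ∉ (H : Set R) := by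
  have : a * t ∈ (K : Set R) * (S \ (H : Set R)) :=
    Set.mul_mem_mul ha ⟨ht, htH⟩
  rw [h1] at this
  exact ⟨this.1, this.2⟩

private lemma helperR {R : Type*} [Group R] {S : Set R} {K H : Subgroup R}
    (h2 : (S \ (H : Set R)) * (K : Set R) = S \ (H : Set R))
    {a t : R} (ha : a ∈ K) (ht : t ∈ S) (htH : t ∉ H) :
    t * a ∈ S ∧ t * a ∉ (H : Set R) := by
  have : t * a ∈ (S \ (H : Set R)) * (K : Set R) :=
    Set.mul_mem_mul ⟨ht, htH⟩ ha
  rw [h2] at this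
  exact ⟨this.1, this.2⟩

/-- the map `α_k` (right multiplication by `k` on `H`, identity outside)
is an automorphism of the Cayley digraph `Cay(R,S)` of a generalised wreath product. -/
theorem stmt0 {R : Type*} [Group R] (S : Set R) (K H : Subgroup R)
    (hK : ⊥ < K) (hKH : K ≤ H)
    (hnorm : ∀ h ∈ H, ∀ k ∈ K, h * k * h⁻¹ ∈ K)
    (hH : H < ⊤)
    (h1 : (K : Set R) * (S \ (H : Set R)) = S \ (H : Set R))
    (h2 : (S \ (H : Set R)) * (K : Set R) = S \ (H : Set R)) :
    ∀ k ∈ K, ∃ α : Equiv.Perm R,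
      (∀ r_ : R, α r_ = if r_ ∈ H then r_ * k else r_) ∧
      (∀ x y : R, x * y⁻¹ ∈ S ↔ α x * (α y)⁻¹ ∈ S) := by
  intro k hk
  have hkH : k ∈ H := hKH hk
  refine ⟨⟨fun r => if r ∈ H then r * k else r,
           fun r => if r ∈ H then r * k⁻¹ else r, ?_, ?_⟩, fun r => rfl, ?_⟩
  · intro r
    by_cases hr : r ∈ H
    · simp [hr, H.mul_mem hr hkH]
    · simp [hr]
  · intro r
    by_cases hr : r ∈ H
    · simp [hr, H.mul_mem hr (H.inv_mem hkH)]
    · simp [hr]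
  · intro x y
    show x * y⁻¹ ∈ S ↔
      (if x ∈ H then x * k else x) * (if y ∈ H then y * k else y)⁻¹ ∈ S
    by_cases hx : x ∈ H <;> by_cases hy : y ∈ H
    · simp only [hx, hy, if_pos]
      have : x * k * (y * k)⁻¹ = x * y⁻¹ := by group
      rw [this]
    · -- x ∈ H, y ∉ H
      simp only [hx, hy, if_pos, if_neg, not_false_iff]
      have ha : x * k * x⁻¹ ∈ K := hnorm x hx k hk
      have ha' : (x * k * x⁻¹)⁻¹ ∈ K := K.inv_mem ha
      have hne : x * y⁻¹ ∉ H := fun h => hy (by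
        have := H.mul_mem (H.inv_mem hx) h
        rw [show x⁻¹ * (x * y⁻¹) = y⁻¹ by group] at this
        simpa using H.inv_mem this)
      have hne2 : x * k * y⁻¹ ∉ H := fun h => hy (by
        have hxk : x * k ∈ H := H.mul_mem hx hkH
        have := H.mul_mem (H.inv_mem hxk) h
        rw [show (x*k)⁻¹ * (x * k * y⁻¹) = y⁻¹ by group] at this
        simpa using H.inv_mem this)
      constructor
      · intro hs
        have := (helperL h1 ha hs hne).1
        rwa [show x * k * x⁻¹ * (x * y⁻¹) = x * k * y⁻¹ by group] at this
      · intro hs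
        have := (helperL h1 ha' hs hne2).1
        rwa [show (x * k * x⁻¹)⁻¹ * (x * k * y⁻¹) = x * y⁻¹ by group] at this
    · -- x ∉ H, y ∈ H
      simp only [hx, hy, if_pos, if_neg, not_false_iff]
      have hb : y * k⁻¹ * y⁻¹ ∈ K := hnorm y hy k⁻¹ (K.inv_mem hk)
      have hb' : (y * k⁻¹ * y⁻¹)⁻¹ ∈ K := K.inv_mem hb
      have hne : x * y⁻¹ ∉ H := fun h => hx (by
        have := H.mul_mem h hy
        rwa [show x * y⁻¹ * y = x by group] at this)
      have hne2 : x * (y * k)⁻¹ ∉ H := fun h => hx (by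
        have hyk : y * k ∈ H := H.mul_mem hy hkH
        have := H.mul_mem h hyk
        rwa [show x * (y*k)⁻¹ * (y * k) = x by group] at this)
      constructor
      · intro hs
        have := (helperR h2 hb hs hne).1
        rwa [show x * y⁻¹ * (y * k⁻¹ * y⁻¹) = x * (y * k)⁻¹ by group] at this
      · intro hs
        have := (helperR h2 hb' hs hne2).1
        rwa [show x * (y * k)⁻¹ * (y * k⁻¹ * y⁻¹)⁻¹ = x * y⁻¹ by group] at this
    · simp only [hx, hy, if_neg, not_false_iff]
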